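/- Let y_m > 0 and let f : ℝ → ℝ be continuous and strictly positive on [0, y_m]. Set F(y) = ∫₀^y f(s) ds, h(y) = F(y_m) − F(y), and C = ∫₀^{y_m} h(s)^{-1/2} ds. Define q(s) = h(s)^{-1/2} / C. Then q > 0 on (0, y_m), ∫₀^{y_m} q(s) ds = 1, and ∫₀^{y_m} h(s) q(s)³ ds = C^{-2}; i.e. the minimum in the reformulated variational principle is attained at q proportional to h^{-1/2}. -/

import Mathlib

open MeasureTheory intervalIntegral Set

/-- The minimum in the reformulated variational principle (2.12b) is attained
at `q = h^{-1/2}/C` with `C = ∫₀^{y_m} h^{-1/2}`: this `q` is positive,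
normalized, and satisfies `∫₀^{y_m} h q³ = C^{-2}`. -/
theorem stmt_8 (y_m : ℝ) (hym : 0 < y_m) (f : ℝ → ℝ)
    (hf_cont : ContinuousOn f (Set.Icc 0 y_m))
    (hf_pos : ∀ y ∈ Set.Icc 0 y_m, 0 < f y)
    (F h : ℝ → ℝ)
    (hF : ∀ y, F y = ∫ s in (0:ℝ)..y, f s)
    (hh : ∀ y, h y = F y_m - F y)
    (C : ℝ) (hC : C = ∫ s in (0:ℝ)..y_m, (h s) ^ (-(1/2) : ℝ))
    (q : ℝ → ℝ) (hq : ∀ s, q s = (h s) ^ (-(1/2) : ℝ) / C) :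
    (∀ s ∈ Set.Ioo 0 y_m, 0 < q s) ∧
      (∫ s in (0:ℝ)..y_m, q s) = 1 ∧
      (∫ s in (0:ℝ)..y_m, h s * (q s) ^ 3) = (C ^ 2)⁻¹ := by
  have hym' : (0:ℝ) ≤ y_m := hym.le
  have hIcc : Set.uIcc (0:ℝ) y_m = Set.Icc 0 y_m := uIcc_of_le hym'
  -- f is interval integrable on subintervals of [0, y_m]
  have hf_int : ∀ a b, a ∈ Icc (0:ℝ) y_m → b ∈ Icc (0:ℝ) y_m →
      IntervalIntegrable f volume a b := by
    intro a b ha hb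
    exact ((hf_cont.mono (uIcc_subset_Icc ha hb))).intervalIntegrable
  have h0ym : (0:ℝ) ∈ Icc (0:ℝ) y_m := ⟨le_refl 0, hym'⟩
  have hymm : y_m ∈ Icc (0:ℝ) y_m := ⟨hym', le_refl y_m⟩
  -- h s equals the integral of f from s to y_m
  have hhs : ∀ s ∈ Icc (0:ℝ) y_m, h s = ∫ t in s..y_m, f t := by
    intro s hs
    rw [hh, hF, hF]
    exact integral_interval_sub_left (hf_int 0 y_m h0ym hymm) (hf_int 0 s h0ym hs)
  -- minimum of f
  obtain ⟨x₀, hx₀, hmin'⟩ := isCompact_Icc.exists_isMinOn (nonempty_Icc.mpr hym') hf_cont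
  have hmin : ∀ x ∈ Icc (0:ℝ) y_m, f x₀ ≤ f x := fun x hx => hmin' hx
  set m : ℝ := f x₀ with hm_def
  have hm : 0 < m := hf_pos x₀ hx₀
  -- lower bound for h
  have hlow : ∀ s ∈ Icc (0:ℝ) y_m, m * (y_m - s) ≤ h s := by
    intro s hs
    rw [hhs s hs]
    have hconst : IntervalIntegrable (fun _ : ℝ => m) volume s y_m :=
      intervalIntegrable_const
    have hmono := intervalIntegral.integral_mono_on hs.2 hconst
      (hf_int s y_m hs hymm)
      (fun x hx => hmin x ⟨le_trans hs.1 hx.1, hx.2⟩)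
    simpa [intervalIntegral.integral_const, smul_eq_mul, mul_comm] using hmono
  have hpos : ∀ s ∈ Ico (0:ℝ) y_m, 0 < h s := by
    intro s hs
    have := hlow s ⟨hs.1, hs.2.le⟩
    have : 0 < m * (y_m - s) := mul_pos hm (by linarith [hs.2])
    linarith [hlow s ⟨hs.1, hs.2.le⟩]
  have hhym : h y_m = 0 := by rw [hh]; ring
  -- continuity of h on [0, y_m]
  have hFc : ContinuousOn F (Icc 0 y_m) := by
    have hint : IntegrableOn f (uIcc (0:ℝ) y_m) volume := by
      rw [hIcc]; exact hf_cont.integrableOn_Icc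
    have := continuousOn_primitive_interval (a := (0:ℝ)) (b := y_m) (μ := volume) hint
    rw [hIcc] at this
    exact this.congr fun y _ => (hF y)
  have hhc : ContinuousOn h (Icc 0 y_m) :=
    (continuousOn_const.sub hFc).congr fun y _ => (hh y)
  -- measurability of h^{-1/2} on Ioc 0 y_m
  have hrestr : volume.restrict (Ioc (0:ℝ) y_m) = volume.restrict (Ioo (0:ℝ) y_m) :=
    (Measure.restrict_congr_set Ioo_ae_eq_Ioc).symm
  have hmeas : AEStronglyMeasurable (fun s => h s ^ (-(1/2) : ℝ))
      (volume.restrict (Set.uIoc (0:ℝ) y_m)) := by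
    rw [uIoc_of_le hym', hrestr]
    have hcont : ContinuousOn (fun s => h s ^ (-(1/2) : ℝ)) (Ioo 0 y_m) := by
      apply ContinuousOn.rpow_const (hhc.mono Ioo_subset_Icc_self)
      intro x hx
      exact Or.inl (hpos x ⟨hx.1.le, hx.2⟩).ne'
    exact hcont.aestronglyMeasurable measurableSet_Ioo
  -- integrable majorant
  have hg2 : IntervalIntegrable (fun s => m ^ (-(1/2) : ℝ) * (y_m - s) ^ (-(1/2) : ℝ))
      volume 0 y_m := by
    have h1 : IntervalIntegrable (fun x : ℝ => x ^ (-(1/2) : ℝ)) volume 0 y_m :=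
      intervalIntegrable_rpow' (by norm_num)
    have h2 := (h1.comp_sub_left y_m).symm
    simp only [sub_zero, sub_self] at h2
    exact h2.const_mul _
  -- integrability of h^{-1/2}
  have hI : IntervalIntegrable (fun s => h s ^ (-(1/2) : ℝ)) volume 0 y_m := by
    refine hg2.mono_fun' hmeas ?_
    rw [uIoc_of_le hym']
    filter_upwards [ae_restrict_mem measurableSet_Ioc] with s hs
    rcases eq_or_lt_of_le hs.2 with heq | hlt
    · rw [heq, hhym]
      simp [Real.zero_rpow (by norm_num : (-(1/2):ℝ) ≠ 0)]
    · have hps : 0 < h s := hpos s ⟨hs.1.le, hlt⟩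
      have hmb : 0 < m * (y_m - s) := mul_pos hm (by linarith)
      rw [Real.norm_eq_abs, abs_of_nonneg (Real.rpow_nonneg hps.le _)]
      calc h s ^ (-(1/2) : ℝ) ≤ (m * (y_m - s)) ^ (-(1/2) : ℝ) :=
            Real.rpow_le_rpow_of_nonpos hmb (hlow s ⟨hs.1.le, hs.2⟩) (by norm_num)
        _ = m ^ (-(1/2) : ℝ) * (y_m - s) ^ (-(1/2) : ℝ) :=
            Real.mul_rpow hm.le (by linarith)
  -- C > 0
  have hCpos : 0 < C := by
    rw [hC]
    refine intervalIntegral_pos_of_pos_on hI (fun x hx => ?_) hym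
    exact Real.rpow_pos_of_pos (hpos x ⟨hx.1.le, hx.2⟩) _
  refine ⟨?_, ?_, ?_⟩
  · intro s hs
    rw [hq]
    exact div_pos (Real.rpow_pos_of_pos (hpos s ⟨hs.1.le, hs.2⟩) _) hCpos
  · simp only [hq]
    rw [intervalIntegral.integral_div, ← hC, div_self hCpos.ne']
  · have heq : EqOn (fun s => h s * q s ^ 3)
        (fun s => h s ^ (-(1/2) : ℝ) / C ^ 3) (uIcc (0:ℝ) y_m) := by
      intro s hs
      rw [hIcc] at hs
      simp only [hq, div_pow]
      rcases eq_or_lt_of_le hs.2 with hse | hlt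
      · rw [hse, hhym]
        simp [Real.zero_rpow (by norm_num : (-(1/2):ℝ) ≠ 0)]
      · have hps : 0 < h s := hpos s ⟨hs.1, hlt⟩
        have key : h s * (h s ^ (-(1/2) : ℝ)) ^ 3 = h s ^ (-(1/2) : ℝ) := by
          rw [← Real.rpow_natCast (h s ^ (-(1/2) : ℝ)) 3, ← Real.rpow_mul hps.le]
          have h2 := Real.rpow_add hps 1 (-(1/2) * ((3:ℕ):ℝ))
          rw [Real.rpow_one] at h2
          rw [← h2]
          norm_num
        rw [mul_div_assoc', key]
    rw [intervalIntegral.integral_congr heq, intervalIntegral.integral_div, ← hC]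
    have hC0 : C ≠ 0 := hCpos.ne'
    field_simp
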